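/- arXiv:1705.10661 — 2 statements merged into one kernel-verified Lean document; each statement's English description precedes it below -/
import Mathlib

section
/- Quadratic implicit function theorem: Let ‖·‖ be a norm on ℂ^d, let A be an invertible linear map on ℂ^d, B a linear map on ℂ^d, and Q : ℂ^d × ℂ^d → ℂ^d a bounded bilinear map with ‖Q‖ = sup_{x,y≠0} ‖Q(x,y)‖/(‖x‖‖y‖) < ∞. Set ε₂ = (2‖A⁻¹‖‖Q‖)⁻¹ and ε₁ = ε₂·(2‖A⁻¹‖‖B‖)⁻¹. Then there exists a unique function X : B_{ε₁}(0) → B_{ε₂}(0) such that A·X(d) + Q(X(d), X(d)) = B·d for all d with ‖d‖ < ε₁; moreover X satisfies the Lipschitz bound ‖X(d₁) - X(d₂)‖ ≤ 2‖A⁻¹‖‖B‖·‖d₁ - d₂‖ for all d₁, d₂ with ‖dᵢ‖ < ε₁/2. -/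
open Metric NNReal in
private lemma exists_fixed_in_ball {E : Type*} [NormedAddCommGroup E] [NormedSpace ℂ E]
    [CompleteSpace E] (F : E → E) (r : ℝ) (hr : 0 ≤ r) (k : ℝ≥0) (hk : k < 1)
    (hmap : ∀ x, ‖x‖ ≤ r → ‖F x‖ ≤ r)
    (hlip : ∀ x y, ‖x‖ ≤ r → ‖y‖ ≤ r → ‖F x - F y‖ ≤ k * ‖x - y‖) :
    ∃ x : E, ‖x‖ ≤ r ∧ F x = x := by
  haveI : CompleteSpace (closedBall (0:E) r) :=
    Metric.isClosed_closedBall.completeSpace_coe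
  haveI : Nonempty (closedBall (0:E) r) := ⟨⟨0, by simpa using hr⟩⟩
  have hmem : ∀ x : closedBall (0:E) r, ‖(x : E)‖ ≤ r := fun x => by
    have := x.2; rwa [mem_closedBall, dist_zero_right] at this
  set f : closedBall (0:E) r → closedBall (0:E) r := fun x =>
    ⟨F x, by rw [mem_closedBall, dist_zero_right]; exact hmap x (hmem x)⟩ with hf
  have hc : ContractingWith k f := by
    refine ⟨hk, LipschitzWith.of_dist_le_mul fun x y => ?_⟩
    simp only [hf, Subtype.dist_eq, dist_eq_norm]
    exact hlip x y (hmem x) (hmem y)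
  exact ⟨(ContractingWith.fixedPoint f hc).1, hmem _,
    congrArg Subtype.val (ContractingWith.fixedPoint_isFixedPt hc)⟩

private lemma qdiff_bound {E : Type*} [NormedAddCommGroup E] [NormedSpace ℂ E]
    (Q : E →L[ℂ] E →L[ℂ] E) (x y : E) :
    ‖Q x x - Q y y‖ ≤ ‖Q‖ * (‖x‖ + ‖y‖) * ‖x - y‖ := by
  have hdecomp : Q x x - Q y y = Q x (x - y) + Q (x - y) y := by
    rw [map_sub, map_sub, ContinuousLinearMap.sub_apply]; abel
  rw [hdecomp]
  have h1 : ‖Q x (x - y)‖ ≤ ‖Q‖ * ‖x‖ * ‖x - y‖ := Q.le_opNorm₂ x (x - y)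
  have h2 : ‖Q (x - y) y‖ ≤ ‖Q‖ * ‖x - y‖ * ‖y‖ := Q.le_opNorm₂ (x - y) y
  calc ‖Q x (x - y) + Q (x - y) y‖ ≤ ‖Q x (x - y)‖ + ‖Q (x - y) y‖ := norm_add_le _ _
    _ ≤ ‖Q‖ * ‖x‖ * ‖x - y‖ + ‖Q‖ * ‖x - y‖ * ‖y‖ := add_le_add h1 h2
    _ = ‖Q‖ * (‖x‖ + ‖y‖) * ‖x - y‖ := by ring

set_option maxHeartbeats 1000000 in
/-- **Quadratic implicit function theorem.** With `A` an invertible linear map,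
`B` linear, `Q` a bounded bilinear map on a finite-dimensional complex normed space,
and `ε₂ = (2‖A⁻¹‖‖Q‖)⁻¹`, `ε₁ = ε₂ (2‖A⁻¹‖‖B‖)⁻¹`, there exists a unique
`X : B_{ε₁}(0) → B_{ε₂}(0)` with `A X(d) + Q(X(d), X(d)) = B d`, which moreover
is Lipschitz with constant `2‖A⁻¹‖‖B‖` on the ball of radius `ε₁/2`. -/
theorem quadratic_implicit_function_theorem {E : Type*} [NormedAddCommGroup E]
    [NormedSpace ℂ E] [FiniteDimensional ℂ E]
    (A : E ≃L[ℂ] E) (B : E →L[ℂ] E) (Q : E →L[ℂ] E →L[ℂ] E)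
    (ε₁ ε₂ : ℝ)
    (hε₂ : ε₂ = (2 * ‖(A.symm : E →L[ℂ] E)‖ * ‖Q‖)⁻¹)
    (hε₁ : ε₁ = ε₂ * (2 * ‖(A.symm : E →L[ℂ] E)‖ * ‖B‖)⁻¹) :
    ∃ X : E → E,
      (∀ d, ‖d‖ < ε₁ → ‖X d‖ < ε₂ ∧ A (X d) + Q (X d) (X d) = B d) ∧
      (∀ X' : E → E,
          (∀ d, ‖d‖ < ε₁ → ‖X' d‖ < ε₂ ∧ A (X' d) + Q (X' d) (X' d) = B d) →
          ∀ d, ‖d‖ < ε₁ → X' d = X d) ∧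
      ∀ d₁ d₂, ‖d₁‖ < ε₁ / 2 → ‖d₂‖ < ε₁ / 2 →
        ‖X d₁ - X d₂‖ ≤ 2 * ‖(A.symm : E →L[ℂ] E)‖ * ‖B‖ * ‖d₁ - d₂‖ := by
  classical
  haveI : CompleteSpace E := FiniteDimensional.complete ℂ E
  set a := ‖(A.symm : E →L[ℂ] E)‖ with ha
  have ha0 : 0 ≤ a := norm_nonneg _
  rcases le_or_gt ε₁ 0 with h1 | h1
  · exact ⟨0, fun d hd => absurd hd (by push_neg; linarith [norm_nonneg d]),
      fun X' _ d hd => absurd hd (by push_neg; linarith [norm_nonneg d]),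
      fun d₁ d₂ hd₁ _ => absurd hd₁ (by push_neg; linarith [norm_nonneg d₁])⟩
  -- Nondegenerate case: all norms are positive.
  have hab : 0 < a * ‖B‖ := by
    rcases (mul_nonneg ha0 (norm_nonneg B)).lt_or_eq with h | h
    · exact h
    · rw [hε₁, show (2 : ℝ) * a * ‖B‖ = 2 * (a * ‖B‖) by ring, ← h] at h1
      simp at h1
  have hapos : 0 < a := by
    rcases ha0.lt_or_eq with h | h
    · exact h
    · rw [← h] at hab; simp at hab
  have hbpos : 0 < ‖B‖ := by
    rcases (norm_nonneg B).lt_or_eq with h | h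
    · exact h
    · rw [← h] at hab; simp at hab
  have hqpos : 0 < ‖Q‖ := by
    rcases (norm_nonneg Q).lt_or_eq with h | h
    · exact h
    · exfalso; rw [hε₂, ← h] at hε₁; simp at hε₁; rw [hε₁] at h1; simp at h1
  have h2 : 2 * a * ‖Q‖ * ε₂ = 1 := by
    rw [hε₂]; field_simp
  have h3 : 2 * a * ‖B‖ * ε₁ = ε₂ := by
    rw [hε₁]; field_simp
  have hε₂pos : 0 < ε₂ := by nlinarith [mul_pos hapos hqpos]
  -- symm bound
  have hsymm : ∀ w : E, ‖A.symm w‖ ≤ a * ‖w‖ := fun w =>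
    (A.symm : E →L[ℂ] E).le_opNorm w
  -- Characterization of solutions as fixed points.
  have hchar : ∀ d x : E, (A x + Q x x = B d) ↔ A.symm (B d - Q x x) = x := by
    intro d x
    rw [ContinuousLinearEquiv.symm_apply_eq, sub_eq_iff_eq_add]
    exact ⟨fun h => h.symm, fun h => h.symm⟩
  -- Existence of fixed points.
  have key : ∀ d : E, ‖d‖ < ε₁ →
      ∃ x : E, ‖x‖ ≤ 2 * a * ‖B‖ * ‖d‖ ∧ A x + Q x x = B d := by
    intro d hd
    set r : ℝ := 2 * a * ‖B‖ * ‖d‖ with hr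
    have hrnn : 0 ≤ r := by positivity
    set F : E → E := fun x => A.symm (B d - Q x x) with hF
    have hkr : 2 * a * ‖Q‖ * r < 1 := by
      have hrε : r < ε₂ := by
        rw [← h3, hr]
        have := mul_pos (mul_pos two_pos hapos) hbpos
        exact (mul_lt_mul_iff_right₀ (by nlinarith)).mpr hd
      nlinarith [mul_pos hapos hqpos]
    have hknn : 0 ≤ 2 * a * ‖Q‖ * r := by positivity
    obtain ⟨x, hxr, hxfix⟩ := exists_fixed_in_ball F r hrnn ⟨2 * a * ‖Q‖ * r, hknn⟩
      (by exact_mod_cast hkr)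
      (fun x hx => by
        have hBd : ‖B d‖ ≤ ‖B‖ * ‖d‖ := B.le_opNorm d
        have hQx : ‖Q x x‖ ≤ ‖Q‖ * ‖x‖ * ‖x‖ := Q.le_opNorm₂ x x
        have hFx : ‖F x‖ ≤ a * ‖B d - Q x x‖ := hsymm _
        have h4 : ‖B d - Q x x‖ ≤ ‖B‖ * ‖d‖ + ‖Q‖ * ‖x‖ * ‖x‖ := by
          calc ‖B d - Q x x‖ ≤ ‖B d‖ + ‖Q x x‖ := norm_sub_le _ _
            _ ≤ _ := add_le_add hBd hQx
        have h5 : a * ‖Q‖ * (‖x‖ * ‖x‖) ≤ a * ‖Q‖ * (r * r) := by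
          apply mul_le_mul_of_nonneg_left _ (by positivity)
          exact mul_le_mul hx hx (norm_nonneg x) hrnn
        nlinarith [mul_le_mul_of_nonneg_left h4 ha0,
          mul_nonneg (sub_pos.mpr hkr).le hrnn])
      (fun x y hx hy => by
        have hdiff : F x - F y = A.symm (Q y y - Q x x) := by
          simp only [hF, ← map_sub]; congr 1; abel
        have hq : ‖Q y y - Q x x‖ ≤ ‖Q‖ * (‖y‖ + ‖x‖) * ‖y - x‖ := qdiff_bound Q y x
        push_cast
        calc ‖F x - F y‖ ≤ a * ‖Q y y - Q x x‖ := by rw [hdiff]; exact hsymm _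
          _ ≤ a * (‖Q‖ * (‖y‖ + ‖x‖) * ‖y - x‖) :=
            mul_le_mul_of_nonneg_left hq ha0
          _ = a * ‖Q‖ * (‖y‖ + ‖x‖) * ‖x - y‖ := by rw [norm_sub_rev]; ring
          _ ≤ a * ‖Q‖ * (r + r) * ‖x - y‖ := by
            apply mul_le_mul_of_nonneg_right _ (norm_nonneg _)
            exact mul_le_mul_of_nonneg_left (add_le_add hy hx) (by positivity)
          _ = 2 * a * ‖Q‖ * r * ‖x - y‖ := by ring)
    exact ⟨x, hxr, (hchar d x).mpr hxfix⟩
  -- Uniqueness of solutions.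
  have uniq : ∀ d x y : E, ‖x‖ < ε₂ → ‖y‖ < ε₂ →
      A x + Q x x = B d → A y + Q y y = B d → x = y := by
    intro d x y hxlt hylt hxeq hyeq
    by_contra hne
    have hpos : 0 < ‖x - y‖ := by rw [norm_pos_iff, sub_ne_zero]; exact hne
    have hdiff : x - y = A.symm (Q y y - Q x x) := by
      calc x - y = A.symm (B d - Q x x) - A.symm (B d - Q y y) := by
            rw [(hchar d x).mp hxeq, (hchar d y).mp hyeq]
        _ = A.symm ((B d - Q x x) - (B d - Q y y)) := by rw [← map_sub]
        _ = A.symm (Q y y - Q x x) := by congr 1; abel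
    have hb : ‖x - y‖ ≤ a * ‖Q‖ * (‖y‖ + ‖x‖) * ‖x - y‖ := by
      calc ‖x - y‖ ≤ a * ‖Q y y - Q x x‖ := by rw [hdiff]; exact hsymm _
        _ ≤ a * (‖Q‖ * (‖y‖ + ‖x‖) * ‖y - x‖) :=
          mul_le_mul_of_nonneg_left (qdiff_bound Q y x) ha0
        _ = a * ‖Q‖ * (‖y‖ + ‖x‖) * ‖x - y‖ := by rw [norm_sub_rev]; ring
    have hlt : a * ‖Q‖ * (‖y‖ + ‖x‖) < 1 := by
      nlinarith [mul_pos hapos hqpos]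
    nlinarith [mul_pos hapos hqpos, norm_nonneg x, norm_nonneg y]
  -- Lipschitz estimate for solutions.
  have lip : ∀ d₁ d₂ x y : E, ‖x‖ ≤ ε₂ / 2 → ‖y‖ ≤ ε₂ / 2 →
      A x + Q x x = B d₁ → A y + Q y y = B d₂ →
      ‖x - y‖ ≤ 2 * a * ‖B‖ * ‖d₁ - d₂‖ := by
    intro d₁ d₂ x y hxle hyle hxeq hyeq
    have hdiff : x - y = A.symm ((B d₁ - B d₂) - (Q x x - Q y y)) := by
      calc x - y = A.symm (B d₁ - Q x x) - A.symm (B d₂ - Q y y) := by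
            rw [(hchar d₁ x).mp hxeq, (hchar d₂ y).mp hyeq]
        _ = A.symm ((B d₁ - Q x x) - (B d₂ - Q y y)) := by rw [← map_sub]
        _ = A.symm ((B d₁ - B d₂) - (Q x x - Q y y)) := by congr 1; abel
    have hBd : ‖B d₁ - B d₂‖ ≤ ‖B‖ * ‖d₁ - d₂‖ := by
      have h := B.le_opNorm (d₁ - d₂); rwa [map_sub B d₁ d₂] at h
    have hQd : ‖Q x x - Q y y‖ ≤ ‖Q‖ * (‖x‖ + ‖y‖) * ‖x - y‖ := qdiff_bound Q x y
    have hb : ‖x - y‖ ≤ a * (‖B‖ * ‖d₁ - d₂‖ + ‖Q‖ * (‖x‖ + ‖y‖) * ‖x - y‖) := by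
      refine le_trans (hdiff ▸ hsymm _) (mul_le_mul_of_nonneg_left ?_ ha0)
      calc ‖(B d₁ - B d₂) - (Q x x - Q y y)‖ ≤ ‖B d₁ - B d₂‖ + ‖Q x x - Q y y‖ :=
            norm_sub_le _ _
        _ ≤ _ := add_le_add hBd hQd
    have hsum : a * ‖Q‖ * (‖x‖ + ‖y‖) ≤ 1 / 2 := by
      nlinarith [mul_pos hapos hqpos]
    nlinarith [mul_pos hapos hqpos, norm_nonneg (x - y), norm_nonneg (d₁ - d₂),
      mul_le_mul_of_nonneg_right hsum (norm_nonneg (x - y))]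
  -- Definition of X.
  set X : E → E := fun d => if h : ‖d‖ < ε₁ then (key d h).choose else 0 with hX
  have hXle : ∀ d, ∀ h : ‖d‖ < ε₁, ‖X d‖ ≤ 2 * a * ‖B‖ * ‖d‖ := fun d h => by
    simp only [hX, dif_pos h]; exact (key d h).choose_spec.1
  have hXeq : ∀ d, ∀ h : ‖d‖ < ε₁, A (X d) + Q (X d) (X d) = B d := fun d h => by
    simp only [hX, dif_pos h]; exact (key d h).choose_spec.2
  have hXlt : ∀ d, ∀ h : ‖d‖ < ε₁, ‖X d‖ < ε₂ := fun d h => by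
    have h5 := hXle d h
    have h6 : 2 * a * ‖B‖ * ‖d‖ < 2 * a * ‖B‖ * ε₁ :=
      (mul_lt_mul_iff_right₀ (by nlinarith)).mpr h
    rw [h3] at h6; linarith
  refine ⟨X, fun d hd => ⟨hXlt d hd, hXeq d hd⟩,
    fun X' hX' d hd =>
      uniq d (X' d) (X d) (hX' d hd).1 (hXlt d hd) (hX' d hd).2 (hXeq d hd),
    fun d₁ d₂ hd₁ hd₂ => ?_⟩
  have hd₁' : ‖d₁‖ < ε₁ := by linarith
  have hd₂' : ‖d₂‖ < ε₁ := by linarith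
  refine lip d₁ d₂ (X d₁) (X d₂) ?_ ?_ (hXeq d₁ hd₁') (hXeq d₂ hd₂')
  · have h5 := hXle d₁ hd₁'
    nlinarith [mul_pos (mul_pos two_pos hapos) hbpos]
  · have h5 := hXle d₂ hd₂'
    nlinarith [mul_pos (mul_pos two_pos hapos) hbpos]
end

section
/- Cumulant summation identity: for a finite multiset X' of random variables with finite moments, |X'| · E[∏X'] = ∑_{X'' ⊆ X'} |X''| · E[∏(X' \ X'')] · κ(X''), where the sum is over all sub-multisets X'' of X', ∏X denotes the product of the elements of X, and κ denotes the joint cumulant. -/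
open MeasureTheory

/-- `P` is a set partition of the finset `s`: its blocks are nonempty subsets of `s`
and every element of `s` lies in exactly one block. -/
def IsPartitionOn {ι : Type*} (s : Finset ι) (P : Finset (Finset ι)) : Prop :=
  (∀ B ∈ P, B.Nonempty ∧ B ⊆ s) ∧ ∀ i ∈ s, ∃! B, B ∈ P ∧ i ∈ B

open Classical in
/-- The joint cumulant of the family `(X i)_{i ∈ s}` defined by the set-partition
Möbius formula `κ = ∑_P (-1)^{|P|-1}(|P|-1)! ∏_{B ∈ P} E[∏_{i ∈ B} X_i]`. -/
noncomputable def cumulantOn {Ω : Type*} [MeasurableSpace Ω] (μ : Measure Ω)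
    {ι : Type*} [Fintype ι] (s : Finset ι) (X : ι → Ω → ℂ) : ℂ :=
  ∑ P ∈ Finset.univ.filter (IsPartitionOn s),
    (-1 : ℂ) ^ (P.card - 1) * (Nat.factorial (P.card - 1) : ℂ) *
      ∏ B ∈ P, ∫ ω, ∏ i ∈ B, X i ω ∂μ

namespace CumulantAux

open Finset

variable {ι : Type*} [Fintype ι] [DecidableEq ι]

set_option linter.unusedSectionVars false

/-- Sum of block sizes of a partition is the size of the ground set. -/
lemma sum_card_of_partition {S : Finset ι} {Q : Finset (Finset ι)}
    (hQ : IsPartitionOn S Q) : ∑ B ∈ Q, B.card = S.card := by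
  obtain ⟨h1, h2⟩ := hQ
  have hbu : Q.biUnion id = S := by
    ext i
    simp only [mem_biUnion, id]
    constructor
    · rintro ⟨B, hB, hiB⟩; exact (h1 B hB).2 hiB
    · intro hi; obtain ⟨B, ⟨hB, hiB⟩, -⟩ := h2 i hi; exact ⟨B, hB, hiB⟩
  have := Finset.card_biUnion (s := Q) (t := id) ?_
  · rw [hbu] at this; simpa using this.symm
  · intro B hB B' hB' hne
    show Disjoint B B'
    rw [Finset.disjoint_left]
    intro i hiB hiB'
    have hiS : i ∈ S := (h1 B hB).2 hiB
    obtain ⟨C, -, hun⟩ := h2 i hiS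
    exact hne ((hun B ⟨hB, hiB⟩).trans (hun B' ⟨hB', hiB'⟩).symm)

lemma compl_not_mem {S : Finset ι} {P : Finset (Finset ι)}
    (hP : IsPartitionOn S P) (hS : S ≠ Finset.univ) : Sᶜ ∉ P := by
  intro h
  obtain ⟨i, hi⟩ := (Finset.nonempty_iff_ne_empty.2 (fun h => hS ((Finset.compl_eq_empty_iff S).1 h)))
  exact (Finset.mem_compl.1 hi) ((hP.1 _ h).2 hi)

lemma partition_insert_compl {S : Finset ι} {P : Finset (Finset ι)}
    (hP : IsPartitionOn S P) (hS : S ≠ Finset.univ) :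
    IsPartitionOn Finset.univ (insert Sᶜ P) := by
  obtain ⟨h1, h2⟩ := hP
  constructor
  · intro B hB
    rcases Finset.mem_insert.1 hB with rfl | hB
    · exact ⟨(Finset.nonempty_iff_ne_empty.2 (fun h => hS ((Finset.compl_eq_empty_iff S).1 h))), Finset.subset_univ _⟩
    · exact ⟨(h1 B hB).1, Finset.subset_univ _⟩
  · intro i _
    by_cases hi : i ∈ S
    · obtain ⟨B, ⟨hB, hiB⟩, hun⟩ := h2 i hi
      refine ⟨B, ⟨Finset.mem_insert_of_mem hB, hiB⟩, ?_⟩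
      rintro C ⟨hC, hiC⟩
      rcases Finset.mem_insert.1 hC with rfl | hC
      · exact absurd hi (Finset.mem_compl.1 hiC)
      · exact hun C ⟨hC, hiC⟩
    · refine ⟨Sᶜ, ⟨Finset.mem_insert_self _ _, Finset.mem_compl.2 hi⟩, ?_⟩
      rintro C ⟨hC, hiC⟩
      rcases Finset.mem_insert.1 hC with rfl | hC
      · rfl
      · exact absurd ((h1 C hC).2 hiC) hi

lemma partition_erase {Q : Finset (Finset ι)} {B : Finset ι}
    (hQ : IsPartitionOn Finset.univ Q) (hB : B ∈ Q) :
    IsPartitionOn Bᶜ (Q.erase B) := by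
  obtain ⟨h1, h2⟩ := hQ
  constructor
  · intro C hC
    have hCQ := Finset.mem_of_mem_erase hC
    have hne := Finset.ne_of_mem_erase hC
    refine ⟨(h1 C hCQ).1, ?_⟩
    intro i hiC
    rw [Finset.mem_compl]
    intro hiB
    obtain ⟨D, -, hun⟩ := h2 i (Finset.mem_univ i)
    exact hne ((hun C ⟨hCQ, hiC⟩).trans (hun B ⟨hB, hiB⟩).symm)
  · intro i hi
    obtain ⟨C, ⟨hC, hiC⟩, hun⟩ := h2 i (Finset.mem_univ i)
    have hne : C ≠ B := by
      rintro rfl; exact (Finset.mem_compl.1 hi) hiC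
    refine ⟨C, ⟨Finset.mem_erase.2 ⟨hne, hC⟩, hiC⟩, ?_⟩
    rintro D ⟨hD, hiD⟩
    exact hun D ⟨Finset.mem_of_mem_erase hD, hiD⟩

lemma partition_card_one {Q : Finset (Finset ι)}
    (hQ : IsPartitionOn Finset.univ Q) (h1 : Q.card = 1) : Q = {Finset.univ} := by
  obtain ⟨B, rfl⟩ := Finset.card_eq_one.1 h1
  have : B = Finset.univ := by
    apply Finset.eq_univ_iff_forall.2
    intro i
    obtain ⟨C, ⟨hC, hiC⟩, -⟩ := hQ.2 i (Finset.mem_univ i)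
    rwa [Finset.mem_singleton.1 hC] at hiC
  rw [this]

lemma partition_singleton_univ [Nonempty ι] :
    IsPartitionOn (Finset.univ : Finset ι) ({Finset.univ} : Finset (Finset ι)) := by
  constructor
  · intro B hB
    rw [Finset.mem_singleton.1 hB]
    exact ⟨Finset.univ_nonempty, Finset.Subset.refl _⟩
  · intro i _
    exact ⟨Finset.univ, ⟨Finset.mem_singleton_self _, Finset.mem_univ i⟩,
      fun C hC => Finset.mem_singleton.1 hC.1⟩

/-- The coefficient `(-1)^(k-1) (k-1)!` in the cumulant formula. -/
noncomputable def cc (k : ℕ) : ℂ := (-1 : ℂ) ^ (k - 1) * (Nat.factorial (k - 1) : ℂ)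

open Classical in
lemma key (m : Finset ι → ℂ) (hm0 : m ∅ = 1) :
    ∑ S : Finset ι, (S.card : ℂ) * m Sᶜ *
        ∑ P ∈ Finset.univ.filter (IsPartitionOn S), cc P.card * ∏ B ∈ P, m B
      = (Fintype.card ι : ℂ) * m Finset.univ := by
  set N : ℕ := Fintype.card ι with hN
  -- Step 1: reindex the sum over pairs (S ≠ univ, P partition of S) as
  -- pairs (Q partition of univ, B ∈ Q), via S = Bᶜ, P = Q.erase B
  have key2 :
      ∑ S ∈ (Finset.univ : Finset (Finset ι)).erase Finset.univ,
        ∑ P ∈ Finset.univ.filter (IsPartitionOn S),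
          (S.card : ℂ) * m Sᶜ * (cc P.card * ∏ B ∈ P, m B)
      = ∑ Q ∈ Finset.univ.filter (IsPartitionOn (Finset.univ : Finset ι)),
          ∑ B ∈ Q, ((Bᶜ.card : ℂ) * m B *
            (cc (Q.erase B).card * ∏ B' ∈ Q.erase B, m B')) := by
    rw [Finset.sum_sigma', Finset.sum_sigma']
    refine Finset.sum_nbij' (fun p => ⟨insert p.1ᶜ p.2, p.1ᶜ⟩)
      (fun q => ⟨q.2ᶜ, q.1.erase q.2⟩) ?_ ?_ ?_ ?_ ?_
    · rintro ⟨S, P⟩ hp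
      rw [Finset.mem_sigma] at hp ⊢
      obtain ⟨hS, hP⟩ := hp
      have hS' : S ≠ Finset.univ := Finset.ne_of_mem_erase hS
      have hP' : IsPartitionOn S P := (Finset.mem_filter.1 hP).2
      exact ⟨Finset.mem_filter.2 ⟨Finset.mem_univ _, partition_insert_compl hP' hS'⟩,
        Finset.mem_insert_self _ _⟩
    · rintro ⟨Q, B⟩ hq
      rw [Finset.mem_sigma] at hq ⊢
      obtain ⟨hQ, hB⟩ := hq
      have hQ' : IsPartitionOn Finset.univ Q := (Finset.mem_filter.1 hQ).2
      have hBne : B.Nonempty := (hQ'.1 B hB).1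
      constructor
      · refine Finset.mem_erase.2 ⟨?_, Finset.mem_univ _⟩
        intro h
        rw [Finset.compl_eq_univ_iff] at h
        exact Finset.nonempty_iff_ne_empty.1 hBne h
      · exact Finset.mem_filter.2 ⟨Finset.mem_univ _, partition_erase hQ' hB⟩
    · rintro ⟨S, P⟩ hp
      rw [Finset.mem_sigma] at hp
      have hS' : S ≠ Finset.univ := Finset.ne_of_mem_erase hp.1
      have hP' : IsPartitionOn S P := (Finset.mem_filter.1 hp.2).2
      have h1 : (insert Sᶜ P).erase Sᶜ = P := Finset.erase_insert (compl_not_mem hP' hS')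
      simp [h1, compl_compl]
    · rintro ⟨Q, B⟩ hq
      rw [Finset.mem_sigma] at hq
      have h1 : insert B (Q.erase B) = Q := Finset.insert_erase hq.2
      simp [h1, compl_compl]
    · rintro ⟨S, P⟩ hp
      rw [Finset.mem_sigma] at hp
      have hS' : S ≠ Finset.univ := Finset.ne_of_mem_erase hp.1
      have hP' : IsPartitionOn S P := (Finset.mem_filter.1 hp.2).2
      have h1 : (insert Sᶜ P).erase Sᶜ = P := Finset.erase_insert (compl_not_mem hP' hS')
      simp [h1, compl_compl]
  -- Step 2: simplify the inner sum over blocks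
  have key3 : ∀ Q ∈ Finset.univ.filter (IsPartitionOn (Finset.univ : Finset ι)),
      ∑ B ∈ Q, ((Bᶜ.card : ℂ) * m B *
            (cc (Q.erase B).card * ∏ B' ∈ Q.erase B, m B'))
      = ((Q.card : ℂ) * N - N) * cc (Q.card - 1) * ∏ B ∈ Q, m B := by
    intro Q hQ
    have hQ' : IsPartitionOn Finset.univ Q := (Finset.mem_filter.1 hQ).2
    have hsum : ∑ B ∈ Q, (B.card : ℂ) = (N : ℂ) := by
      have h := sum_card_of_partition hQ'
      rw [Finset.card_univ, ← hN] at h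
      exact_mod_cast congrArg (fun k : ℕ => (k : ℂ)) h
    have step : ∀ B ∈ Q, ((Bᶜ.card : ℂ) * m B *
            (cc (Q.erase B).card * ∏ B' ∈ Q.erase B, m B'))
        = ((N : ℂ) - (B.card : ℂ)) * cc (Q.card - 1) * ∏ B' ∈ Q, m B' := by
      intro B hB
      rw [Finset.card_erase_of_mem hB, Finset.card_compl, ← Finset.mul_prod_erase Q m hB,
        Nat.cast_sub (by simpa using Finset.card_le_univ B)]
      ring
    rw [Finset.sum_congr rfl step, ← Finset.sum_mul, ← Finset.sum_mul,
      Finset.sum_sub_distrib, hsum, Finset.sum_const, nsmul_eq_mul]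
  -- Step 3: vanishing of the coefficient except for one-block partitions
  have hcoef : ∀ k : ℕ, k ≠ 1 →
      (N : ℂ) * cc k + ((k : ℂ) * N - N) * cc (k - 1) = 0 := by
    intro k hk
    match k with
    | 0 => show (N : ℂ) * cc 0 + ((0 : ℕ) * N - N) * cc 0 = 0; simp [cc]
    | 1 => exact absurd rfl hk
    | (j+2) =>
      have h1 : cc (j+2) = (-1 : ℂ)^(j+1) * (Nat.factorial (j+1) : ℂ) := rfl
      have h2 : cc (j+2-1) = (-1 : ℂ)^j * (Nat.factorial j : ℂ) := rfl
      rw [h1, h2, pow_succ, Nat.factorial_succ]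
      push_cast
      ring
  -- Assemble
  rw [← Finset.sum_erase_add _ _ (Finset.mem_univ (Finset.univ : Finset ι))]
  have hrw : ∀ S ∈ (Finset.univ : Finset (Finset ι)).erase Finset.univ,
      (S.card : ℂ) * m Sᶜ *
        ∑ P ∈ Finset.univ.filter (IsPartitionOn S), cc P.card * ∏ B ∈ P, m B
      = ∑ P ∈ Finset.univ.filter (IsPartitionOn S),
          (S.card : ℂ) * m Sᶜ * (cc P.card * ∏ B ∈ P, m B) :=
    fun S _ => Finset.mul_sum _ _ _
  rw [Finset.sum_congr rfl hrw, key2, Finset.sum_congr rfl key3]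
  have hlast : ((Finset.univ : Finset ι).card : ℂ) * m (Finset.univ : Finset ι)ᶜ *
        ∑ P ∈ Finset.univ.filter (IsPartitionOn (Finset.univ : Finset ι)),
          cc P.card * ∏ B ∈ P, m B
      = ∑ Q ∈ Finset.univ.filter (IsPartitionOn (Finset.univ : Finset ι)),
          (N : ℂ) * (cc Q.card * ∏ B ∈ Q, m B) := by
    rw [Finset.card_univ, ← hN, Finset.compl_univ, hm0, mul_one, Finset.mul_sum]
  rw [hlast, ← Finset.sum_add_distrib]
  -- now a single sum over partitions of univ
  by_cases hN0 : N = 0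
  · simp [hN0]
  · have : Nonempty ι := Fintype.card_pos_iff.1 (by rw [← hN]; exact Nat.pos_of_ne_zero hN0)
    have hzero : ∀ Q ∈ Finset.univ.filter (IsPartitionOn (Finset.univ : Finset ι)),
        Q ≠ ({Finset.univ} : Finset (Finset ι)) →
        ((Q.card : ℂ) * N - N) * cc (Q.card - 1) * ∏ B ∈ Q, m B
          + (N : ℂ) * (cc Q.card * ∏ B ∈ Q, m B) = 0 := by
      intro Q hQ hne
      have hQ' : IsPartitionOn Finset.univ Q := (Finset.mem_filter.1 hQ).2
      have hk : Q.card ≠ 1 := fun h => hne (partition_card_one hQ' h)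
      have h0 := hcoef Q.card hk
      have heq : ((Q.card : ℂ) * N - N) * cc (Q.card - 1) * ∏ B ∈ Q, m B
          + (N : ℂ) * (cc Q.card * ∏ B ∈ Q, m B)
          = ((N : ℂ) * cc Q.card + ((Q.card : ℂ) * N - N) * cc (Q.card - 1)) * ∏ B ∈ Q, m B := by
        ring
      rw [heq, h0, zero_mul]
    rw [Finset.sum_eq_single_of_mem
      (f := fun Q : Finset (Finset ι) => ((Q.card : ℂ) * N - N) * cc (Q.card - 1) * ∏ B ∈ Q, m B
          + (N : ℂ) * (cc Q.card * ∏ B ∈ Q, m B))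
      ({Finset.univ} : Finset (Finset ι))
      (Finset.mem_filter.2 ⟨Finset.mem_univ _, partition_singleton_univ⟩) hzero]
    have hc1 : cc 1 = 1 := by simp [cc]
    simp only [Finset.card_singleton, hc1, Finset.prod_singleton]
    ring

end CumulantAux


open Classical in
/-- **Cumulant summation identity**: for a finite family `X' = (w₁,…,w_n)`,
`|X'|·E[∏X'] = ∑_{X'' ⊆ X'} |X''|·E[∏(X'∖X'')]·κ(X'')`. -/
theorem cumulant_summation_identity {Ω : Type*} [MeasurableSpace Ω] (μ : Measure Ω)
    [IsProbabilityMeasure μ] {n : ℕ} (w : Fin n → Ω → ℂ)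
    (hwm : ∀ i, Measurable (w i)) (hwb : ∃ C, ∀ i ω, ‖w i ω‖ ≤ C) :
    (n : ℂ) * ∫ ω, ∏ i, w i ω ∂μ =
      ∑ S ∈ (Finset.univ : Finset (Fin n)).powerset,
        (S.card : ℂ) * (∫ ω, ∏ i ∈ Sᶜ, w i ω ∂μ) * cumulantOn μ S w := by
  rw [Finset.powerset_univ]
  have h := CumulantAux.key (ι := Fin n) (fun B => ∫ ω, ∏ i ∈ B, w i ω ∂μ) (by simp)
  rw [Fintype.card_fin] at h
  rw [← h]
  rfl
end
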